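/- Let λ₁ > 0, λ₂ < 0, and ζ, P_min ∈ ℝ. Consider m = inf{(1+λ₁)x + (1+λ₂)y + ζ : x ≥ 0, y ≥ 0, λ₁ x + λ₂ y + ζ ≥ P_min}. Then the infimum is attained and: (i) if ζ ≥ P_min and λ₂ ≥ −1, then m = ζ; (ii) if ζ ≥ P_min and λ₂ < −1, then m = P_min + (ζ − P_min)/(−λ₂); (iii) if ζ < P_min, then m = P_min + (P_min − ζ)/λ₁. -/

import Mathlib

/-- The reduced two-variable linear program of the DF power
minimization: `inf {(1+λ₁)x + (1+λ₂)y + ζ : x, y ≥ 0, λ₁x + λ₂y + ζ ≥ P_min}` is attained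
and equals `ζ` if `ζ ≥ P_min, λ₂ ≥ −1`; `P_min + (ζ − P_min)/(−λ₂)` if
`ζ ≥ P_min, λ₂ < −1`; and `P_min + (P_min − ζ)/λ₁` if `ζ < P_min`. -/
theorem stmt15 (lam₁ lam₂ ζ Pmin : ℝ) (hlam₁ : 0 < lam₁) (hlam₂ : lam₂ < 0)
    (S : Set ℝ)
    (hS : S = {v : ℝ | ∃ x y : ℝ, 0 ≤ x ∧ 0 ≤ y ∧
      Pmin ≤ lam₁ * x + lam₂ * y + ζ ∧ v = (1 + lam₁) * x + (1 + lam₂) * y + ζ}) :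
    ((Pmin ≤ ζ ∧ -1 ≤ lam₂) → IsLeast S ζ) ∧
    ((Pmin ≤ ζ ∧ lam₂ < -1) → IsLeast S (Pmin + (ζ - Pmin) / (-lam₂))) ∧
    (ζ < Pmin → IsLeast S (Pmin + (Pmin - ζ) / lam₁)) := by
  subst hS
  refine ⟨?_, ?_, ?_⟩
  · rintro ⟨h1, h2⟩
    constructor
    · exact ⟨0, 0, le_refl 0, le_refl 0, by linarith, by ring⟩
    · rintro v ⟨x, y, hx, hy, hc, rfl⟩
      nlinarith [mul_nonneg hx hlam₁.le, mul_nonneg hy (by linarith : (0:ℝ) ≤ 1 + lam₂)]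
  · rintro ⟨h1, h2⟩
    have hμ : 0 < -lam₂ := by linarith
    constructor
    · refine ⟨0, (ζ - Pmin) / (-lam₂), le_refl 0,
        div_nonneg (by linarith) hμ.le, ?_, ?_⟩
      · have : lam₂ * ((ζ - Pmin) / (-lam₂)) = -(ζ - Pmin) := by
          have hne : lam₂ ≠ 0 := hlam₂.ne
          field_simp
        rw [this]; ring_nf; linarith
      · have : lam₂ * ((ζ - Pmin) / (-lam₂)) = -(ζ - Pmin) := by
          have hne : lam₂ ≠ 0 := hlam₂.ne
          field_simp
        nlinarith [this]
    · rintro v ⟨x, y, hx, hy, hc, rfl⟩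
      have ht : (ζ - Pmin) / (-lam₂) * (-lam₂) = ζ - Pmin :=
        div_mul_cancel₀ _ hμ.ne'
      nlinarith [ht, mul_nonneg hx (by linarith : (0:ℝ) ≤ lam₁ - lam₂),
        mul_nonneg (by linarith : (0:ℝ) ≤ -lam₂ - 1)
          (by linarith : (0:ℝ) ≤ lam₁ * x + lam₂ * y + ζ - Pmin)]
  · intro h
    constructor
    · refine ⟨(Pmin - ζ) / lam₁, 0, div_nonneg (by linarith) hlam₁.le, le_refl 0, ?_, ?_⟩
      · have : lam₁ * ((Pmin - ζ) / lam₁) = Pmin - ζ := by field_simp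
        rw [this]; ring_nf; linarith
      · have : lam₁ * ((Pmin - ζ) / lam₁) = Pmin - ζ := by field_simp
        nlinarith [this]
    · rintro v ⟨x, y, hx, hy, hc, rfl⟩
      have hs : (Pmin - ζ) / lam₁ * lam₁ = Pmin - ζ :=
        div_mul_cancel₀ _ hlam₁.ne'
      nlinarith [hs, mul_nonneg hy (by linarith : (0:ℝ) ≤ lam₁ - lam₂),
        mul_nonneg hlam₁.le
          (by linarith : (0:ℝ) ≤ lam₁ * x + lam₂ * y + ζ - Pmin)]
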